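/- Let Z ~ N(m, s^2) with s > 0 and α ∈ (0,1). Then the tail conditional expectation of L = y − x·e^Z beyond its VaR satisfies E[L · 1{L ≥ VaR^α(L)}] = α·y − x·e^{m + s^2/2}·Φ(Φ^{-1}(α) − s), where VaR^α(L) = y − x·exp(m + s·Φ^{-1}(α)), for any y ∈ ℝ and x > 0. -/

import Mathlib

open MeasureTheory ProbabilityTheory
open Set

/-- Standard normal cumulative distribution function. -/
noncomputable def stdCDF (x : ℝ) : ℝ := ((gaussianReal 0 1) (Set.Iic x)).toReal

-- stdCDF as integral of pdf
lemma stdCDF_eq_integral (t : ℝ) :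
    stdCDF t = ∫ u in Set.Iic t, gaussianPDFReal 0 1 u := by
  rw [stdCDF, gaussianReal_apply_eq_integral 0 one_ne_zero,
    ENNReal.toReal_ofReal]
  exact setIntegral_nonneg measurableSet_Iic fun u _ => gaussianPDFReal_nonneg _ _ _

lemma continuous_stdCDF : Continuous stdCDF := by
  have h : ∀ t, stdCDF t = stdCDF 0 + ∫ u in (0:ℝ)..t, gaussianPDFReal 0 1 u := by
    intro t
    rw [stdCDF_eq_integral, stdCDF_eq_integral]
    have := intervalIntegral.integral_Iic_sub_Iic
      ((integrable_gaussianPDFReal 0 1).integrableOn (s := Set.Iic 0))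
      ((integrable_gaussianPDFReal 0 1).integrableOn (s := Set.Iic t))
    linarith
  rw [show stdCDF = fun t => stdCDF 0 + ∫ u in (0:ℝ)..t, gaussianPDFReal 0 1 u from funext h]
  exact continuous_const.add ((integrable_gaussianPDFReal 0 1).continuous_primitive 0)

lemma monotone_stdCDF : Monotone stdCDF := by
  intro a b hab
  unfold stdCDF
  refine ENNReal.toReal_mono (measure_ne_top _ _) (measure_mono (Set.Iic_subset_Iic.2 hab))

lemma stdCDF_eq_cdf : stdCDF = cdf (gaussianReal 0 1) := by
  ext t; rw [cdf_eq_real]; rfl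

/-- Standard normal quantile function (inverse CDF). -/
noncomputable def stdQuantile (a : ℝ) : ℝ := sInf {x : ℝ | a ≤ stdCDF x}

lemma stdCDF_stdQuantile {α : ℝ} (hα : α ∈ Set.Ioo (0:ℝ) 1) :
    stdCDF (stdQuantile α) = α := by
  obtain ⟨hα0, hα1⟩ := hα
  set S := {x : ℝ | α ≤ stdCDF x} with hS
  have htop : Filter.Tendsto stdCDF Filter.atTop (nhds 1) := by
    rw [stdCDF_eq_cdf]; exact tendsto_cdf_atTop _
  have hbot : Filter.Tendsto stdCDF Filter.atBot (nhds 0) := by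
    rw [stdCDF_eq_cdf]; exact tendsto_cdf_atBot _
  obtain ⟨t1, ht1⟩ : ∃ t1, α ≤ stdCDF t1 := by
    have h := htop.eventually (eventually_ge_nhds hα1)
    exact (h.exists).imp fun t ht => ht
  obtain ⟨t0, ht0⟩ : ∃ t0, stdCDF t0 < α := by
    have h := hbot.eventually (eventually_lt_nhds hα0)
    exact h.exists
  have hne : S.Nonempty := ⟨t1, ht1⟩
  have hbdd : BddBelow S := by
    refine ⟨t0, fun t ht => ?_⟩
    by_contra h
    push_neg at h
    exact absurd (le_trans ht (monotone_stdCDF h.le)) (not_le.2 ht0)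
  have hclosed : IsClosed S := IsClosed.preimage continuous_stdCDF isClosed_Ici
  have hq_mem : stdQuantile α ∈ S := hclosed.csInf_mem hne hbdd
  have ht0q : t0 ≤ stdQuantile α := le_csInf hne fun t ht => by
    by_contra h
    push_neg at h
    exact absurd (le_trans ht (monotone_stdCDF h.le)) (not_le.2 ht0)
  obtain ⟨t, htmem, htval⟩ := intermediate_value_Icc ht0q continuous_stdCDF.continuousOn
    (Set.mem_Icc.2 ⟨ht0.le, hq_mem⟩)
  have : stdQuantile α ≤ t := csInf_le hbdd htval.ge
  have : t = stdQuantile α := le_antisymm htmem.2 this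
  rw [← this, htval]

lemma gaussianReal_Iic_eq_stdCDF {s : ℝ} (hs : 0 < s) (m0 c : ℝ) :
    ((gaussianReal m0 (Real.toNNReal (s ^ 2))) (Set.Iic c)).toReal
      = stdCDF ((c - m0) / s) := by
  have hv : (Real.toNNReal (s ^ 2)) = (⟨s^2, sq_nonneg _⟩ * 1 : NNReal) := by
    ext
    push_cast
    simp [Real.coe_toNNReal _ (sq_nonneg s)]
    exact (congrArg NNReal.toReal (mul_one (⟨s^2, sq_nonneg s⟩ : NNReal))).symm
  have hmap : gaussianReal m0 (Real.toNNReal (s ^ 2))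
      = ((gaussianReal 0 1).map (s * ·)).map (· + m0) := by
    rw [gaussianReal_map_const_mul, gaussianReal_map_add_const]
    rw [hv]; norm_num
    exact congrArg (gaussianReal m0) (mul_one (⟨s^2, sq_nonneg s⟩ : NNReal))
  rw [hmap, Measure.map_apply (by fun_prop) measurableSet_Iic,
    Measure.map_apply (by fun_prop) (by measurability)]
  have h1 : (· + m0) ⁻¹' Set.Iic c = Set.Iic (c - m0) := by
    ext t; simp [le_sub_iff_add_le]
  rw [h1]
  have h2 : (s * ·) ⁻¹' Set.Iic (c - m0) = Set.Iic ((c - m0) / s) := by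
    ext t; simp [le_div_iff₀ hs, mul_comm]
  rw [h2]; rfl

lemma exp_mul_gaussianPDFReal {s : ℝ} (hs : 0 < s) (m z : ℝ) :
    Real.exp z * gaussianPDFReal m (Real.toNNReal (s ^ 2)) z
      = Real.exp (m + s ^ 2 / 2) * gaussianPDFReal (m + s ^ 2) (Real.toNNReal (s ^ 2)) z := by
  have hv : ((Real.toNNReal (s ^ 2)) : ℝ) = s ^ 2 := Real.coe_toNNReal _ (sq_nonneg s)
  unfold gaussianPDFReal
  rw [hv]
  have hs2 : (0:ℝ) < s ^ 2 := by positivity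
  rw [mul_left_comm, mul_left_comm (Real.exp (m + s ^ 2 / 2)),
    ← Real.exp_add, ← Real.exp_add]
  congr 2
  field_simp
  ring

lemma setIntegral_gaussianReal {m0 : ℝ} {v : NNReal} (hv : v ≠ 0) {t : Set ℝ}
    (ht : MeasurableSet t) (g : ℝ → ℝ) :
    ∫ z in t, g z ∂(gaussianReal m0 v) = ∫ z in t, gaussianPDFReal m0 v z * g z := by
  rw [gaussianReal_of_var_ne_zero _ hv, gaussianPDF_def, restrict_withDensity ht]
  have h1 : (fun x => ENNReal.ofReal (gaussianPDFReal m0 v x))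
      = fun x => ((Real.toNNReal (gaussianPDFReal m0 v x) : NNReal) : ENNReal) := rfl
  rw [h1, integral_withDensity_eq_integral_smul
    ((measurable_gaussianPDFReal m0 v).real_toNNReal) g]
  congr 1; ext z
  simp [NNReal.smul_def, Real.coe_toNNReal _ (gaussianPDFReal_nonneg m0 v z)]

lemma integral_pdf_Iic (m0 : ℝ) {v : NNReal} (hv : v ≠ 0) (c : ℝ) :
    ∫ z in Set.Iic c, gaussianPDFReal m0 v z = ((gaussianReal m0 v) (Set.Iic c)).toReal := by
  rw [gaussianReal_apply_eq_integral m0 hv, ENNReal.toReal_ofReal]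
  exact setIntegral_nonneg measurableSet_Iic fun u _ => gaussianPDFReal_nonneg _ _ _

theorem unnormalized_tce_lognormal (m s x y α : ℝ) (hs : 0 < s) (hx : 0 < x)
    (hα : α ∈ Set.Ioo (0 : ℝ) 1) :
    ∫ z in {z : ℝ | y - x * Real.exp z ≥ y - x * Real.exp (m + s * stdQuantile α)},
        (y - x * Real.exp z) ∂(gaussianReal m (Real.toNNReal (s ^ 2))) =
      α * y - x * Real.exp (m + s ^ 2 / 2) * stdCDF (stdQuantile α - s) := by
  have hs2 : (0:ℝ) < s ^ 2 := by positivity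
  set v : NNReal := Real.toNNReal (s ^ 2) with hvdef
  have hv : v ≠ 0 := by
    simp [hvdef, Real.toNNReal_eq_zero, not_le, hs2, hs.ne']
  set q := stdQuantile α with hq
  set c := m + s * q with hc
  have hset : {z : ℝ | y - x * Real.exp z ≥ y - x * Real.exp c} = Set.Iic c := by
    ext z
    simp only [Set.mem_setOf_eq, Set.mem_Iic, ge_iff_le, sub_le_sub_iff_left,
      mul_le_mul_iff_right₀ hx, Real.exp_le_exp]
  rw [hset, setIntegral_gaussianReal hv measurableSet_Iic]
  have hpt : ∀ z, gaussianPDFReal m v z * (y - x * Real.exp z)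
      = y * gaussianPDFReal m v z
        - (x * Real.exp (m + s ^ 2 / 2)) * gaussianPDFReal (m + s ^ 2) v z := by
    intro z
    have h := exp_mul_gaussianPDFReal hs m z
    rw [← hvdef] at h
    linear_combination (-x) * h
  simp only [hpt]
  rw [integral_sub (((integrable_gaussianPDFReal m v).restrict).const_mul y)
    (((integrable_gaussianPDFReal (m + s ^ 2) v).restrict).const_mul _),
    integral_const_mul, integral_const_mul, integral_pdf_Iic m hv,
    integral_pdf_Iic (m + s ^ 2) hv]
  rw [hvdef, gaussianReal_Iic_eq_stdCDF hs, gaussianReal_Iic_eq_stdCDF hs]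
  have e1 : (c - m) / s = q := by field_simp [hc]; linarith
  have e2 : (c - (m + s ^ 2)) / s = q - s := by field_simp [hc]; ring
  rw [e1, e2, stdCDF_stdQuantile hα]
  ring
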